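/- Let k be an integer with 3 ≤ k ≤ v-3. Let G and G' be graphs on the same vertex set V of size v. If for every k-element subset K of V, the number of 3-homogeneous subsets of G|_K equals the number of 3-homogeneous subsets of G'|_K, then G and G' have exactly the same 3-homogeneous subsets (i.e., a 3-element set is homogeneous in G iff it is homogeneous in G'). -/

import Mathlib

section Aux
open Finset

variable {V : Type*} [DecidableEq V]

variable {V : Type*} [DecidableEq V]

/-- Number of supersets of `S` of size `m` inside `L`. -/
lemma card_supersets (L S : Finset V) (hS : S ⊆ L) (m : ℕ) (hm : S.card ≤ m) :
    ((L.powersetCard m).filter (fun K => S ⊆ K)).card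
      = (L.card - S.card).choose (m - S.card) := by
  rw [← card_sdiff_of_subset hS, ← card_powersetCard]
  apply Finset.card_bij' (fun K _ => K \ S) (fun A _ => A ∪ S)
  · intro K hK
    simp only [mem_filter, mem_powersetCard] at hK
    simp only [mem_powersetCard]
    exact ⟨sdiff_subset_sdiff hK.1.1 subset_rfl,
      by rw [card_sdiff_of_subset hK.2, hK.1.2]⟩
  · intro A hA
    simp only [mem_powersetCard] at hA
    have hdisj : Disjoint A S := by
      refine disjoint_left.2 fun a haA haS => ?_
      exact (mem_sdiff.1 (hA.1 haA)).2 haS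
    simp only [mem_filter, mem_powersetCard]
    refine ⟨⟨union_subset (hA.1.trans sdiff_subset) hS, ?_⟩, subset_union_right⟩
    rw [card_union_of_disjoint hdisj, hA.2]
    omega
  · intro K hK
    simp only [mem_filter, mem_powersetCard] at hK
    exact sdiff_union_of_subset hK.2
  · intro A hA
    simp only [mem_powersetCard] at hA
    have hdisj : Disjoint A S := by
      refine disjoint_left.2 fun a haA haS => ?_
      exact (mem_sdiff.1 (hA.1 haA)).2 haS
    rw [union_sdiff_right, sdiff_eq_self_of_disjoint hdisj]

lemma sum_over_subsets (f : Finset V → ℤ) (L : Finset V) (m : ℕ) (hm : 3 ≤ m) :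
    ∑ K ∈ L.powersetCard m, ∑ S ∈ K.powersetCard 3, f S
      = ((L.card - 3).choose (m - 3) : ℤ) * ∑ S ∈ L.powersetCard 3, f S := by
  have h1 : ∀ K ∈ L.powersetCard m, ∑ S ∈ K.powersetCard 3, f S
      = ∑ S ∈ L.powersetCard 3, if S ⊆ K then f S else 0 := by
    intro K hK
    rw [← sum_filter]
    congr 1
    ext S
    simp only [mem_filter, mem_powersetCard] at *
    constructor
    · exact fun hs => ⟨⟨hs.1.trans hK.1, hs.2⟩, hs.1⟩
    · exact fun hs => ⟨hs.2, hs.1.2⟩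
  rw [sum_congr rfl h1, sum_comm, mul_sum]
  refine sum_congr rfl fun S hS => ?_
  rw [mem_powersetCard] at hS
  rw [← sum_filter, sum_const, card_supersets L S hS.1 m (by omega), hS.2,
    nsmul_eq_mul]

end Aux

open Finset


/-- A 3-element subset is homogeneous in `G` if it induces a complete or an empty graph. -/
def IsHomog3 {V : Type*} (G : SimpleGraph V) (S : Finset V) : Prop :=
  S.card = 3 ∧ ((∀ x ∈ S, ∀ y ∈ S, x ≠ y → G.Adj x y) ∨ (∀ x ∈ S, ∀ y ∈ S, ¬ G.Adj x y))

/-- Number of 3-homogeneous subsets of the induced subgraph of `G` on `K`. -/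
def homog3CountOn {V : Type*} [DecidableEq V] (G : SimpleGraph V) [DecidableRel G.Adj]
    (K : Finset V) : ℕ :=
  ((K.powersetCard 3).filter
    (fun S => (∀ x ∈ S, ∀ y ∈ S, x ≠ y → G.Adj x y) ∨ (∀ x ∈ S, ∀ y ∈ S, ¬ G.Adj x y))).card

/-- If the numbers of 3-homogeneous subsets of `G` and `G'` agree on every `k`-set,
`3 ≤ k ≤ v - 3`, then `G` and `G'` have the same 3-homogeneous subsets. -/
theorem same_homog3_of_counts {V : Type*} [Fintype V] [DecidableEq V]
    (G G' : SimpleGraph V) [DecidableRel G.Adj] [DecidableRel G'.Adj]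
    (k : ℕ) (hk3 : 3 ≤ k) (hkv : k + 3 ≤ Fintype.card V)
    (h : ∀ K : Finset V, K.card = k → homog3CountOn G K = homog3CountOn G' K) :
    ∀ S : Finset V, IsHomog3 G S ↔ IsHomog3 G' S := by
    classical
  set d : Finset V → ℤ := fun S =>
    (if (∀ x ∈ S, ∀ y ∈ S, x ≠ y → G.Adj x y) ∨ (∀ x ∈ S, ∀ y ∈ S, ¬ G.Adj x y) then 1 else 0)
    - (if (∀ x ∈ S, ∀ y ∈ S, x ≠ y → G'.Adj x y) ∨ (∀ x ∈ S, ∀ y ∈ S, ¬ G'.Adj x y) then 1 else 0)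
    with hd
  -- the basic vanishing at level k
  have hF0 : ∀ K : Finset V, K.card = k → ∑ S ∈ K.powersetCard 3, d S = 0 := by
    intro K hK
    have := h K hK
    unfold homog3CountOn at this
    have hcast : ∀ (p : Finset V → Prop) (h1 h2 : DecidablePred p) (s : Finset (Finset V)),
        #(@filter _ p h1 s) = #(@filter _ p h2 s) := by
      intro p h1 h2 s
      congr!
    simp only [hd, sum_sub_distrib, Finset.sum_boole]
    rw [sub_eq_zero]
    norm_cast
    convert this
  -- vanishing at all levels ≥ k
  have hFup : ∀ n : ℕ, ∀ K : Finset V, K.card = k + n →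
      ∑ S ∈ K.powersetCard 3, d S = 0 := by
    intro n
    induction n with
    | zero => simpa using hF0
    | succ n ih =>
      intro L hL
      have hswap := sum_over_subsets d L (k + n) (by omega)
      have hz : ∑ K ∈ L.powersetCard (k + n), ∑ S ∈ K.powersetCard 3, d S = 0 := by
        refine Finset.sum_eq_zero fun K hK => ?_
        rw [mem_powersetCard] at hK
        exact ih K hK.2
      rw [hz, hL] at hswap
      have hc : (k + (n + 1) - 3).choose (k + n - 3) = k + n - 2 := by
        have h1 : k + (n + 1) - 3 = (k + n - 3) + 1 := by omega
        rw [h1, Nat.choose_succ_self_right]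
        omega
      rw [hc] at hswap
      have hne : ((k + n - 2 : ℕ) : ℤ) ≠ 0 := by
        exact_mod_cast (by omega : k + n - 2 ≠ 0)
      exact (mul_eq_zero.1 hswap.symm).resolve_left hne
  -- inclusion-exclusion to get pointwise vanishing
  have key : ∀ T : Finset V, T.card = 3 → d T = 0 := by
    intro T hT
    obtain ⟨L, hTL, -, hLcard⟩ :=
      Finset.exists_subsuperset_card_eq (n := k + 3) (Finset.subset_univ T)
        (by rw [hT]; omega) (by simpa using hkv)
    have hIE : ∑ A ∈ T.powerset, (-1 : ℤ) ^ A.card * ∑ S ∈ (L \ A).powersetCard 3, d S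
        = d T := by
      have h1 : ∀ A ∈ T.powerset, ∑ S ∈ (L \ A).powersetCard 3, d S
          = ∑ S ∈ L.powersetCard 3, if Disjoint S A then d S else 0 := by
        intro A hA
        rw [mem_powerset] at hA
        rw [← sum_filter]
        congr 1
        ext S
        simp only [mem_filter, mem_powersetCard, subset_sdiff] at *
        tauto
      have hstep : ∀ A ∈ T.powerset, (-1 : ℤ) ^ A.card * ∑ S ∈ (L \ A).powersetCard 3, d S
          = ∑ S ∈ L.powersetCard 3, if Disjoint S A then (-1 : ℤ) ^ A.card * d S else 0 := by
        intro A hA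
        rw [h1 A hA, mul_sum]
        exact sum_congr rfl fun S _ => by rw [mul_ite, mul_zero]
      rw [sum_congr rfl hstep, sum_comm]
      have h2 : ∀ S ∈ L.powersetCard 3,
          (∑ A ∈ T.powerset, if Disjoint S A then (-1 : ℤ) ^ A.card * d S else 0)
            = (if S = T then 1 else 0) * d S := by
        intro S hS
        rw [← sum_filter]
        have hfil : T.powerset.filter (fun A => Disjoint S A) = (T \ S).powerset := by
          ext A
          simp only [mem_filter, mem_powerset, subset_sdiff, disjoint_comm]
        rw [hfil, ← sum_mul, Finset.sum_powerset_neg_one_pow_card]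
        congr 1
        rw [mem_powersetCard] at hS
        by_cases hST : S = T
        · simp [hST]
        · have : ¬ (T \ S = ∅) := by
            intro hempty
            have hTS : T ⊆ S := by
              intro x hx
              by_contra hxS
              exact absurd (mem_sdiff.2 ⟨hx, hxS⟩) (by simp [hempty])
            exact hST (Finset.eq_of_subset_of_card_le hTS (by omega)).symm
          simp [this, hST]
      rw [sum_congr rfl h2]
      have hTmem : T ∈ L.powersetCard 3 := mem_powersetCard.2 ⟨hTL, hT⟩
      rw [Finset.sum_eq_single_of_mem T hTmem]
      · simp
      · intro S hS hne
        simp [hne]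
    rw [← hIE]
    refine Finset.sum_eq_zero fun A hA => ?_
    rw [mem_powerset] at hA
    have hAcard : A.card ≤ 3 := hT ▸ card_le_card hA
    have hcard : (L \ A).card = k + (3 - A.card) := by
      rw [card_sdiff_of_subset (hA.trans hTL), hLcard]
      omega
    rw [hFup (3 - A.card) _ hcard, mul_zero]
  -- conclude
  intro S
  constructor
  · rintro ⟨hS, hhom⟩
    refine ⟨hS, ?_⟩
    have := key S hS
    simp only [hd, sub_eq_zero] at this
    by_contra hcon
    simp [hhom, hcon] at this
  · rintro ⟨hS, hhom⟩
    refine ⟨hS, ?_⟩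
    have := key S hS
    simp only [hd, sub_eq_zero] at this
    by_contra hcon
    simp [hhom, hcon] at this
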